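/- (Strategyproof mechanism for g = 2) Fix g = 2, complete preferences, and parameters u ≥ t. Define the mechanism M: if the number of agents n < t, output ∅; else if both |1 ≻ 2| ≥ t and |2 ≻ 1| ≥ t, output {1,2}; else output {1} if |1 ≻ 2| ≥ |2 ≻ 1| and {2} otherwise. Then M is anonymous, always outputs a (t,u)-stable menu, and is strategyproof: no agent can cause their preferred good to be offered by misreporting. -/

import Mathlib

structure MenuProblem (N G : Type) where
  pref : N → List G
  nodup : ∀ i, (pref i).Nodup

namespace MenuProblem

variable {N G : Type} [Fintype N] [DecidableEq G]

/-- The good assigned to agent `i` when menu `O` is offered: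
its favorite ranked good in `O`, if any. -/
def assigned (P : MenuProblem N G) (O : Finset G) (i : N) : Option G :=
  (P.pref i).find? (fun a => decide (a ∈ O))

/-- Number of agents assigned to good `j` when menu `O` is offered. -/
def assignedCount (P : MenuProblem N G) (O : Finset G) (j : G) : ℕ :=
  (Finset.univ.filter (fun i => P.assigned O i = some j)).card

/-- The lobby for a good `j` against menu `O`: the number of agents that
would take `j` if it were added to the menu. -/
def lobby (P : MenuProblem N G) (O : Finset G) (j : G) : ℕ :=
  P.assignedCount (insert j O) j

/-- `|a ≻ b|`: the number of agents that would take `a` from the menu `{a, b}`. -/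
def prefCount (P : MenuProblem N G) (a b : G) : ℕ :=
  P.assignedCount {a, b} a

/-- A menu is `t`-feasible if every offered good is assigned at least `t` agents. -/
def TFeasible (P : MenuProblem N G) (O : Finset G) (t : ℕ) : Prop :=
  ∀ j ∈ O, t ≤ P.assignedCount O j

/-- A menu is `u`-uncontestable if no unoffered good has a lobby of at least `u` agents. -/
def UUncontestable (P : MenuProblem N G) (O : Finset G) (u : ℕ) : Prop :=
  ∀ j ∉ O, P.lobby O j < u

/-- A menu is `(t,u)`-stable if it is `t`-feasible and `u`-uncontestable. -/
def Stable (P : MenuProblem N G) (O : Finset G) (t u : ℕ) : Prop :=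
  P.TFeasible O t ∧ P.UUncontestable O u

end MenuProblem

/-- A menu selection problem has complete preferences if every agent ranks every good. -/
def MenuProblem.CompletePrefs {N G : Type} (P : MenuProblem N G) : Prop :=
  ∀ (i : N) (a : G), a ∈ P.pref i

/-- `OptBetter l o₁ o₂` : outcome `o₁` is strictly preferred to outcome `o₂` by an agent
with ranking `l` (an unranked outcome or the outside option `none` is worst). -/
def OptBetter {G : Type} [DecidableEq G] (l : List G) (o₁ o₂ : Option G) : Prop :=
  match o₁, o₂ with
  | some a, some b => a ∈ l ∧ (b ∉ l ∨ l.idxOf a < l.idxOf b)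
  | some a, none => a ∈ l
  | none, _ => False

open Finset in
lemma card_filter_agree {m : ℕ} (p p' : Fin m → Prop) [DecidablePred p] [DecidablePred p']
    (i : Fin m) (h : ∀ j, j ≠ i → (p j ↔ p' j)) :
    (Finset.univ.filter p).card + (if p' i then 1 else 0)
      = (Finset.univ.filter p').card + (if p i then 1 else 0) := by
  rw [Finset.card_filter, Finset.card_filter,
      ← Finset.sum_erase_add _ _ (Finset.mem_univ i),
      ← Finset.sum_erase_add _ _ (Finset.mem_univ i)]
  have key : ∑ j ∈ Finset.univ.erase i, (if p j then 1 else 0)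
       = ∑ j ∈ Finset.univ.erase i, (if p' j then 1 else 0) := by
    refine Finset.sum_congr rfl fun j hj => ?_
    exact if_congr (h j (Finset.mem_erase.1 hj).1) rfl rfl
  rw [key]
  split_ifs <;> omega

lemma optBetter_irrefl {G : Type} [DecidableEq G] (l : List G) (o : Option G) :
    ¬ OptBetter l o o := by
  rcases o with _ | a
  · simp [OptBetter]
  · rintro ⟨h1, h2 | h2⟩
    · exact h2 h1
    · exact absurd h2 (lt_irrefl _)

lemma not_better_top {G : Type} [DecidableEq G] (l : List G) (a : G) (ha : a ∈ l)
    (h0 : l.idxOf a = 0) (o : Option G) : ¬ OptBetter l o (some a) := by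
  rcases o with _ | b
  · simp [OptBetter]
  · rintro ⟨h1, h2 | h2⟩
    · exact h2 ha
    · omega

namespace MenuProblem
variable {n : ℕ}

lemma pref_two (P : MenuProblem (Fin n) (Fin 2)) (hc : P.CompletePrefs) (i : Fin n) :
    P.pref i = [0, 1] ∨ P.pref i = [1, 0] := by
  have hnd := P.nodup i
  have hlen : (P.pref i).length = 2 := by
    have h1 : (P.pref i).toFinset = Finset.univ :=
      Finset.eq_univ_iff_forall.2 (fun a => List.mem_toFinset.2 (hc i a))
    have h2 := List.toFinset_card_of_nodup hnd
    rw [h1] at h2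
    simpa using h2.symm
  obtain ⟨a, b, hab⟩ := List.length_eq_two.mp hlen
  rw [hab] at hnd ⊢
  have hne : a ≠ b := by simp at hnd; exact hnd
  fin_cases a <;> fin_cases b <;> simp_all

lemma assigned_empty (P : MenuProblem (Fin n) (Fin 2)) (i : Fin n) :
    P.assigned ∅ i = none := by
  rw [assigned]
  apply List.find?_eq_none.2
  intro a _
  simp

lemma assigned_single0 (P : MenuProblem (Fin n) (Fin 2)) (hc : P.CompletePrefs) (i : Fin n) :
    P.assigned {0} i = some 0 := by
  rcases pref_two P hc i with h | h <;> (rw [assigned, h]; decide)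

lemma assigned_single1 (P : MenuProblem (Fin n) (Fin 2)) (hc : P.CompletePrefs) (i : Fin n) :
    P.assigned {1} i = some 1 := by
  rcases pref_two P hc i with h | h <;> (rw [assigned, h]; decide)

lemma assigned_pair01 (P : MenuProblem (Fin n) (Fin 2)) (i : Fin n)
    (h : P.pref i = [0,1]) : P.assigned {0,1} i = some 0 := by
  rw [assigned, h]; decide

lemma assigned_pair10 (P : MenuProblem (Fin n) (Fin 2)) (i : Fin n)
    (h : P.pref i = [1,0]) : P.assigned {0,1} i = some 1 := by
  rw [assigned, h]; decide

lemma pair_comm' : ({1,0} : Finset (Fin 2)) = {0,1} := by decide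

lemma prefCount01 (P : MenuProblem (Fin n) (Fin 2)) (hc : P.CompletePrefs) :
    P.prefCount 0 1 = (Finset.univ.filter fun j => P.pref j = [0,1]).card := by
  rw [prefCount, assignedCount]
  congr 1
  apply Finset.filter_congr
  intro j _
  rcases pref_two P hc j with h | h
  · simp [assigned_pair01 P j h, h]
  · simp [assigned_pair10 P j h, h]

lemma prefCount10 (P : MenuProblem (Fin n) (Fin 2)) (hc : P.CompletePrefs) :
    P.prefCount 1 0 = (Finset.univ.filter fun j => P.pref j = [1,0]).card := by
  rw [prefCount, assignedCount, pair_comm']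
  congr 1
  apply Finset.filter_congr
  intro j _
  rcases pref_two P hc j with h | h
  · simp [assigned_pair01 P j h, h]
  · simp [assigned_pair10 P j h, h]

lemma prefCount_sum (P : MenuProblem (Fin n) (Fin 2)) (hc : P.CompletePrefs) :
    P.prefCount 0 1 + P.prefCount 1 0 = n := by
  rw [prefCount01 P hc, prefCount10 P hc]
  have := Finset.card_filter_add_card_filter_not
    (s := (Finset.univ : Finset (Fin n))) (p := fun j => P.pref j = [0,1])
  rw [Finset.card_univ, Fintype.card_fin] at this
  have he : (Finset.univ.filter fun j => P.pref j = [1,0])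
      = (Finset.univ.filter fun a => ¬ P.pref a = [0,1]) := by
    apply Finset.filter_congr
    intro j _
    rcases pref_two P hc j with h | h <;> simp [h]
  rw [he]
  exact this

lemma assignedCount_le (P : MenuProblem (Fin n) (Fin 2)) (O : Finset (Fin 2)) (j : Fin 2) :
    P.assignedCount O j ≤ n := by
  rw [assignedCount]
  simpa using Finset.card_filter_le Finset.univ (fun i => P.assigned O i = some j)

lemma assignedCount_single0 (P : MenuProblem (Fin n) (Fin 2)) (hc : P.CompletePrefs) :
    P.assignedCount {0} 0 = n := by
  rw [assignedCount]
  rw [Finset.filter_true_of_mem (fun i _ => assigned_single0 P hc i)]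
  simp

lemma assignedCount_single1 (P : MenuProblem (Fin n) (Fin 2)) (hc : P.CompletePrefs) :
    P.assignedCount {1} 1 = n := by
  rw [assignedCount]
  rw [Finset.filter_true_of_mem (fun i _ => assigned_single1 P hc i)]
  simp

end MenuProblem

/-- The mechanism for `g = 2`: offer `∅` if there are fewer than `t` agents; otherwise
offer `{1,2}` if it is stable; otherwise offer the majority winner. -/

def mech2 (t : ℕ) {n : ℕ} (P : MenuProblem (Fin n) (Fin 2)) : Finset (Fin 2) :=
  if n < t then ∅
  else if t ≤ P.prefCount 0 1 ∧ t ≤ P.prefCount 1 0 then {0, 1}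
  else if P.prefCount 1 0 ≤ P.prefCount 0 1 then {0} else {1}

/-- Strategyproof mechanism for `g = 2`: for `u ≥ t` and complete preferences, `mech2` is
stable, anonymous, and strategyproof. -/
theorem mech2_stable_anonymous_strategyproof (t u : ℕ) (htu : t ≤ u) :
    (∀ (n : ℕ) (P : MenuProblem (Fin n) (Fin 2)),
      P.CompletePrefs → P.Stable (mech2 t P) t u) ∧
    (∀ (n : ℕ) (P : MenuProblem (Fin n) (Fin 2)) (σ : Equiv.Perm (Fin n)),
      mech2 t ⟨fun i => P.pref (σ i), fun i => P.nodup (σ i)⟩ = mech2 t P) ∧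
    (∀ (n : ℕ) (P P' : MenuProblem (Fin n) (Fin 2)) (i : Fin n),
      P.CompletePrefs → P'.CompletePrefs →
      (∀ j, j ≠ i → P'.pref j = P.pref j) →
      ¬ OptBetter (P.pref i) (P.assigned (mech2 t P') i) (P.assigned (mech2 t P) i)) := by
  have e10 : ([1,0] : List (Fin 2)) ≠ [0,1] := by decide
  have e01 : ([0,1] : List (Fin 2)) ≠ [1,0] := by decide
  refine ⟨?_, ?_, ?_⟩
  · -- stability
    intro n P hc
    unfold mech2
    split_ifs with h1 h2 h3
    · constructor
      · intro j hj; simp at hj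
      · intro j _
        have := P.assignedCount_le (insert j ∅) j
        rw [MenuProblem.lobby]
        omega
    · push_neg at h1
      constructor
      · intro j hj
        have hj2 : j = 0 ∨ j = 1 := by fin_cases j <;> simp
        rcases hj2 with rfl | rfl
        · exact h2.1
        · have : P.assignedCount {0, 1} 1 = P.prefCount 1 0 := by
            rw [MenuProblem.prefCount, MenuProblem.pair_comm']
          rw [this]; exact h2.2
      · intro j hj
        exact absurd (by fin_cases j <;> simp) hj
    · push_neg at h1
      have hsum := P.prefCount_sum hc
      constructor
      · intro j hj
        have hj0 : j = 0 := by simpa using hj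
        subst hj0
        rw [P.assignedCount_single0 hc]
        omega
      · intro j hj
        have hj1 : j = 1 := by fin_cases j <;> simp_all
        subst hj1
        have hl : P.lobby {0} 1 = P.prefCount 1 0 := rfl
        rw [hl]
        omega
    · push_neg at h1
      have hsum := P.prefCount_sum hc
      constructor
      · intro j hj
        have hj0 : j = 1 := by simpa using hj
        subst hj0
        rw [P.assignedCount_single1 hc]
        omega
      · intro j hj
        have hj1 : j = 0 := by fin_cases j <;> simp_all
        subst hj1
        have hl : P.lobby {1} 0 = P.prefCount 0 1 := rfl
        rw [hl]
        omega
  · -- anonymity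
    intro n P sg
    have key : ∀ a b : Fin 2,
        (⟨fun i => P.pref (sg i), fun i => P.nodup (sg i)⟩ :
          MenuProblem (Fin n) (Fin 2)).prefCount a b = P.prefCount a b := by
      intro a b
      rw [MenuProblem.prefCount, MenuProblem.prefCount,
          MenuProblem.assignedCount, MenuProblem.assignedCount]
      apply Finset.card_equiv sg
      intro j
      simp [MenuProblem.assigned]
    simp only [mech2, key]
  · -- strategyproofness
    intro n P P' i hc hc' hag
    have h0 : P.prefCount 0 1 + (if P'.pref i = [0,1] then 1 else 0)
        = P'.prefCount 0 1 + (if P.pref i = [0,1] then 1 else 0) := by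
      rw [P.prefCount01 hc, P'.prefCount01 hc']
      exact card_filter_agree (fun j => P.pref j = [0,1]) (fun j => P'.pref j = [0,1]) i
        (fun j hj => by simp only [hag j hj])
    have h1 : P.prefCount 1 0 + (if P'.pref i = [1,0] then 1 else 0)
        = P'.prefCount 1 0 + (if P.pref i = [1,0] then 1 else 0) := by
      rw [P.prefCount10 hc, P'.prefCount10 hc']
      exact card_filter_agree (fun j => P.pref j = [1,0]) (fun j => P'.pref j = [1,0]) i
        (fun j hj => by simp only [hag j hj])
    rcases P.pref_two hc i with hp | hp <;> rcases P'.pref_two hc' i with hp' | hp'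
    · -- both [0,1] : same counts
      rw [hp, hp'] at h0 h1
      rw [if_pos rfl] at h0
      rw [if_neg e01] at h1
      have hmenu : mech2 t P' = mech2 t P := by
        simp only [mech2]
        rw [show P'.prefCount 0 1 = P.prefCount 0 1 by omega,
            show P'.prefCount 1 0 = P.prefCount 1 0 by omega]
      rw [hmenu]
      exact optBetter_irrefl _ _
    · -- true [0,1], report [1,0]
      rw [hp, hp'] at h0 h1
      rw [if_neg e10, if_pos rfl] at h0
      rw [if_pos rfl, if_neg e01] at h1
      by_cases hlt : n < t
      · have hm' : mech2 t P' = ∅ := by simp [mech2, hlt]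
        rw [hm', P.assigned_empty i]
        rintro ⟨⟩
      · by_cases hb : t ≤ P.prefCount 0 1 ∧ t ≤ P.prefCount 1 0
        · have hm : mech2 t P = {0,1} := by simp [mech2, hlt, hb]
          rw [hm, P.assigned_pair01 i hp, hp]
          exact not_better_top _ _ (by decide) (by decide) _
        · by_cases hmaj : P.prefCount 1 0 ≤ P.prefCount 0 1
          · have hm : mech2 t P = {0} := by simp [mech2, hlt, hb, hmaj]
            rw [hm, P.assigned_single0 hc i, hp]
            exact not_better_top _ _ (by decide) (by decide) _
          · have hm : mech2 t P = {1} := by simp [mech2, hlt, hb, hmaj]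
            have hx0 : P.prefCount 0 1 < t := by omega
            have hm' : mech2 t P' = {1} := by
              rw [mech2, if_neg hlt, if_neg (by omega), if_neg (by omega)]
            rw [hm, hm']
            exact optBetter_irrefl _ _
    · -- true [1,0], report [0,1]
      rw [hp, hp'] at h0 h1
      rw [if_pos rfl, if_neg e10] at h0
      rw [if_neg e01, if_pos rfl] at h1
      by_cases hlt : n < t
      · have hm' : mech2 t P' = ∅ := by simp [mech2, hlt]
        rw [hm', P.assigned_empty i]
        rintro ⟨⟩
      · by_cases hb : t ≤ P.prefCount 0 1 ∧ t ≤ P.prefCount 1 0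
        · have hm : mech2 t P = {0,1} := by simp [mech2, hlt, hb]
          rw [hm, P.assigned_pair10 i hp, hp]
          exact not_better_top _ _ (by decide) (by decide) _
        · by_cases hmaj : P.prefCount 1 0 ≤ P.prefCount 0 1
          · have hm : mech2 t P = {0} := by simp [mech2, hlt, hb, hmaj]
            have hx1 : P.prefCount 1 0 < t := by omega
            have hm' : mech2 t P' = {0} := by
              rw [mech2, if_neg hlt, if_neg (by omega), if_pos (by omega)]
            rw [hm, hm']
            exact optBetter_irrefl _ _
          · have hm : mech2 t P = {1} := by simp [mech2, hlt, hb, hmaj]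
            rw [hm, P.assigned_single1 hc i, hp]
            exact not_better_top _ _ (by decide) (by decide) _
    · -- both [1,0] : same counts
      rw [hp, hp'] at h0 h1
      rw [if_neg e10] at h0
      rw [if_pos rfl] at h1
      have hmenu : mech2 t P' = mech2 t P := by
        simp only [mech2]
        rw [show P'.prefCount 0 1 = P.prefCount 0 1 by omega,
            show P'.prefCount 1 0 = P.prefCount 1 0 by omega]
      rw [hmenu]
      exact optBetter_irrefl _ _
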